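/- Let N be an abelian group, H a monoid, (E,φ) a compatible pair. The set of factor sets relative to (E,φ), under pointwise multiplication modulo the equivalence g ≡ g' iff there is an identity-preserving function t : H → N with φ(h, t(h'))·t(h·h')^{-1}·t(h)·g'(h,h') ∼^{h·h'} g(h,h') for all h,h', forms an abelian group. -/
import Mathlib


/-- An admissible H-indexed equivalence relation E on N: for each h an equivalence
relation ∼^h on N such that ∼^1 is equality, left multiplication preserves ∼^h, and
n ∼^h n' implies n ∼^{h·y} n'. -/
structure IndexedEqv (H N : Type*) [Monoid H] [Monoid N] where
  r : H → N → N → Prop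
  iseqv : ∀ h, Equivalence (r h)
  one_eq : ∀ {n n' : N}, r 1 n n' → n = n'
  mul_left : ∀ (x : N) {h : H} {n n' : N}, r h n n' → r h (x * n) (x * n')
  mul_right : ∀ (y : H) {h : H} {n n' : N}, r h n n' → r (h * y) n n'

def IndexedEqv.setoid {H N : Type*} [Monoid H] [Monoid N] (E : IndexedEqv H N) (h : H) :
    Setoid N := ⟨E.r h, E.iseqv h⟩

/-- α : H × N → N is a compatible action for the admissible indexed equivalence relation E. -/
structure CompatibleAction {H N : Type*} [Monoid H] [Monoid N] (E : IndexedEqv H N)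
    (α : H → N → N) : Prop where
  c1 : ∀ (h : H) (n n' x : N), E.r h n n' → E.r h (n * α h x) (n' * α h x)
  c2 : ∀ (h : H) (n n' : N) (x : H), E.r h n n' → E.r (x * h) (α x n) (α x n')
  c3 : ∀ (h : H) (n n' : N), E.r h (α h (n * n')) (α h n * α h n')
  c4 : ∀ (h h' : H) (n : N), E.r (h * h') (α (h * h') n) (α h (α h' n))
  c5 : ∀ h : H, E.r h (α h 1) 1
  c6 : ∀ n : N, E.r 1 (α 1 n) n

/-- The carrier ⨆_{h ∈ H} N/∼^h of the weak semidirect product. -/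
def WProd {H N : Type*} [Monoid H] [Monoid N] (E : IndexedEqv H N) : Type _ :=
  (h : H) × Quotient (E.setoid h)

/-- The element ([n], h). -/
def wmk {H N : Type*} [Monoid H] [Monoid N] (E : IndexedEqv H N) (h : H) (n : N) : WProd E :=
  ⟨h, Quotient.mk (E.setoid h) n⟩

/-- The multiplication ([n],h)·([n'],h') = ([n·α(h,n')], h·h') of the weak semidirect
product N ⋊_{E,α} H. -/
def wmul {H N : Type*} [Monoid H] [Monoid N] (E : IndexedEqv H N) {α : H → N → N}
    (hα : CompatibleAction E α) : WProd E → WProd E → WProd E :=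
  fun x y =>
    ⟨x.1 * y.1,
      Quotient.liftOn₂ x.2 y.2
        (fun n n' => Quotient.mk (E.setoid (x.1 * y.1)) (n * α x.1 n'))
        (fun a c b d hab hcd =>
          Quotient.sound
            ((E.iseqv (x.1 * y.1)).trans
              (E.mul_right y.1 (hα.c1 x.1 a b c hab))
              (E.mul_left b (hα.c2 y.1 c d x.1 hcd))))⟩

/-- A factor set relative to the compatible pair (E, α), with abelian group kernel N:
g(h,1) ∼^h 1 ∼^h g(1,h) and g(x,y)·g(xy,z) ∼^{xyz} α(x, g(y,z))·g(x, yz). -/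
def IsFactorSet {H N : Type*} [Monoid H] [CommGroup N] (E : IndexedEqv H N)
    (α : H → N → N) (g : H → H → N) : Prop :=
  (∀ h : H, E.r h (g h 1) 1) ∧ (∀ h : H, E.r h (g 1 h) 1) ∧
  ∀ x y z : H, E.r (x * y * z) (g x y * g (x * y) z) (α x (g y z) * g x (y * z))

/-- The multiplication ([n],h)·([n'],h') = ([n·α(h,n')·g(h,h')], h·h') of
N ⋊_{E,α}^g H. -/
def wgmul {H N : Type*} [Monoid H] [CommGroup N] (E : IndexedEqv H N) {α : H → N → N}
    (g : H → H → N) (hα : CompatibleAction E α) : WProd E → WProd E → WProd E :=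
  fun x y =>
    ⟨x.1 * y.1,
      Quotient.liftOn₂ x.2 y.2
        (fun n n' => Quotient.mk (E.setoid (x.1 * y.1)) (n * α x.1 n' * g x.1 y.1))
        (by
          intro a c b d hab hcd
          apply Quotient.sound
          have h1 : E.r (x.1 * y.1) (a * α x.1 c) (b * α x.1 d) :=
            (E.iseqv _).trans (E.mul_right y.1 (hα.c1 x.1 a b c hab))
              (E.mul_left b (hα.c2 y.1 c d x.1 hcd))
          have h2 := E.mul_left (g x.1 y.1) h1
          show E.r (x.1 * y.1) (a * α x.1 c * g x.1 y.1) (b * α x.1 d * g x.1 y.1)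
          simpa [mul_comm, mul_assoc, mul_left_comm] using h2)⟩

/-- The type of factor sets relative to (E, α). -/
def FactorSets {H N : Type*} [Monoid H] [CommGroup N] (E : IndexedEqv H N)
    (α : H → N → N) : Type _ := {g : H → H → N // IsFactorSet E α g}

/-- Two factor sets are equivalent iff they differ by an inner factor set
δt(h,h') = α(h,t(h'))·t(hh')⁻¹·t(h) for an identity-preserving t : H → N, up to ∼^{hh'}. -/
def fsEquiv {H N : Type*} [Monoid H] [CommGroup N] (E : IndexedEqv H N) (α : H → N → N) :
    FactorSets E α → FactorSets E α → Prop :=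
  fun g g' => ∃ t : H → N, t 1 = 1 ∧
    ∀ h h' : H, E.r (h * h') (α h (t h') * (t (h * h'))⁻¹ * t h * g'.1 h h') (g.1 h h')

section FSAux

variable {H N : Type*} [Monoid H] [CommGroup N] {E : IndexedEqv H N} {α : H → N → N}

namespace FSAux

theorem r_of_eq (E : IndexedEqv H N) {k : H} {a a' b b' : N} (ha : a = a') (hb : b = b')
    (h : E.r k a b) : E.r k a' b' := ha ▸ hb ▸ h

theorem r_mul_right (E : IndexedEqv H N) (x : N) {k : H} {a b : N} (h : E.r k a b) :
    E.r k (a * x) (b * x) := by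
  simpa [mul_comm] using E.mul_left x h

theorem r_mul_congr (E : IndexedEqv H N) {k : H} {a b c d : N} (h1 : E.r k a b)
    (h2 : E.r k c d) : E.r k (a * c) (b * d) :=
  (E.iseqv k).trans (E.mul_left a h2) (r_mul_right E d h1)

theorem r_inv (E : IndexedEqv H N) {k : H} {a b : N} (h : E.r k a b) : E.r k a⁻¹ b⁻¹ := by
  have h2 := E.mul_left (a⁻¹ * b⁻¹) h
  refine (E.iseqv k).symm (r_of_eq E ?_ ?_ h2) <;>
    simp [mul_comm, mul_left_comm, mul_assoc]

theorem alpha_inv (hα : CompatibleAction E α) (h : H) (n : N) :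
    E.r h (α h n⁻¹) (α h n)⁻¹ := by
  have h1 : E.r h (α h n⁻¹ * α h n) 1 :=
    (E.iseqv h).trans ((E.iseqv h).symm
      (r_of_eq E (by simp) rfl (hα.c3 h n⁻¹ n))) (hα.c5 h)
  have h2 := r_mul_right E (α h n)⁻¹ h1
  exact r_of_eq E (by simp [mul_assoc]) (by simp) h2

theorem fs_one (E : IndexedEqv H N) (hα : CompatibleAction E α) :
    IsFactorSet E α (fun _ _ => (1 : N)) := by
  refine ⟨fun h => (E.iseqv h).refl 1, fun h => (E.iseqv h).refl 1, fun x y z => ?_⟩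
  have h0 := E.mul_right (y * z) (hα.c5 x)
  rw [← mul_assoc] at h0
  show E.r (x * y * z) ((1 : N) * 1) (α x 1 * 1)
  exact (E.iseqv _).symm (r_of_eq E (by simp) (by simp) h0)

theorem fs_mul (E : IndexedEqv H N) (hα : CompatibleAction E α) (g g' : FactorSets E α) :
    IsFactorSet E α (fun h h' => g.1 h h' * g'.1 h h') := by
  obtain ⟨hg1, hg2, hg3⟩ := g.2
  obtain ⟨hg1', hg2', hg3'⟩ := g'.2
  refine ⟨fun h => ?_, fun h => ?_, fun x y z => ?_⟩
  · simpa using r_mul_congr E (hg1 h) (hg1' h)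
  · simpa using r_mul_congr E (hg2 h) (hg2' h)
  · have hc : E.r (x * y * z) (α x (g.1 y z * g'.1 y z)) (α x (g.1 y z) * α x (g'.1 y z)) := by
      have h0 := E.mul_right (y * z) (hα.c3 x (g.1 y z) (g'.1 y z))
      rwa [← mul_assoc] at h0
    have h1 := r_mul_congr E (hg3 x y z) (hg3' x y z)
    have hc2 := r_mul_right E (g.1 x (y * z) * g'.1 x (y * z)) hc
    show E.r (x * y * z) (g.1 x y * g'.1 x y * (g.1 (x * y) z * g'.1 (x * y) z))
      (α x (g.1 y z * g'.1 y z) * (g.1 x (y * z) * g'.1 x (y * z)))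
    exact (E.iseqv _).trans
      (r_of_eq E (by simp [mul_comm, mul_left_comm, mul_assoc])
        (by simp [mul_comm, mul_left_comm, mul_assoc]) h1)
      ((E.iseqv _).symm hc2)

theorem fs_inv (E : IndexedEqv H N) (hα : CompatibleAction E α) (g : FactorSets E α) :
    IsFactorSet E α (fun h h' => (g.1 h h')⁻¹) := by
  obtain ⟨hg1, hg2, hg3⟩ := g.2
  refine ⟨fun h => by simpa using r_inv E (hg1 h), fun h => by simpa using r_inv E (hg2 h),
    fun x y z => ?_⟩
  have h1 := r_inv E (hg3 x y z)
  have h2 : E.r (x * y * z) (α x (g.1 y z)⁻¹) (α x (g.1 y z))⁻¹ := by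
    have := E.mul_right (y * z) (alpha_inv hα x (g.1 y z))
    exact r_of_eq E rfl rfl (by simpa [mul_assoc] using this)
  refine (E.iseqv _).trans (r_of_eq E ?_ ?_ h1)
    ((E.iseqv _).symm (r_mul_right E _ h2))
  · simp [mul_comm]
  · simp [mul_comm]

theorem fsEquiv_refl (hα : CompatibleAction E α) (g : FactorSets E α) : fsEquiv E α g g := by
  refine ⟨fun _ => 1, rfl, fun h h' => ?_⟩
  have := r_mul_right E (g.1 h h') (E.mul_right h' (hα.c5 h))
  exact r_of_eq E (by simp [mul_assoc]) (by simp) this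

theorem fsEquiv_symm (hα : CompatibleAction E α) {g g' : FactorSets E α}
    (h : fsEquiv E α g g') : fsEquiv E α g' g := by
  obtain ⟨t, ht1, ht⟩ := h
  refine ⟨fun h => (t h)⁻¹, by simp [ht1], fun h h' => ?_⟩
  set A := α h (t h') * (t (h * h'))⁻¹ * t h with hA
  have key : E.r (h * h') (A⁻¹ * g.1 h h') (g'.1 h h') := by
    have := E.mul_left A⁻¹ (ht h h')
    exact (E.iseqv _).symm (r_of_eq E (by rw [← hA]; exact inv_mul_cancel_left A _) rfl this)
  have hAi : E.r (h * h')
      (α h (t h')⁻¹ * ((t (h * h'))⁻¹)⁻¹ * (t h)⁻¹ * g.1 h h') (A⁻¹ * g.1 h h') := by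
    have := r_mul_right E ((t (h * h'))⁻¹⁻¹ * (t h)⁻¹ * g.1 h h')
      (E.mul_right h' (alpha_inv hα h (t h')))
    refine r_of_eq E ?_ ?_ this
    · simp [mul_assoc]
    · simp [hA, mul_inv_rev, mul_comm, mul_left_comm, mul_assoc]
  exact (E.iseqv _).trans hAi key

theorem fsEquiv_trans (hα : CompatibleAction E α) {g g' g'' : FactorSets E α}
    (h1 : fsEquiv E α g g') (h2 : fsEquiv E α g' g'') : fsEquiv E α g g'' := by
  obtain ⟨t, ht1, ht⟩ := h1
  obtain ⟨s, hs1, hs⟩ := h2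
  refine ⟨fun h => t h * s h, by simp [ht1, hs1], fun h h' => ?_⟩
  have hc : E.r (h * h') (α h (t h' * s h')) (α h (t h') * α h (s h')) := by
    have := E.mul_right h' (hα.c3 h (t h') (s h'))
    exact r_of_eq E rfl rfl this
  have step1 : E.r (h * h')
      (α h (t h' * s h') * (t (h * h') * s (h * h'))⁻¹ * (t h * s h) * g''.1 h h')
      (α h (t h') * α h (s h') * (t (h * h') * s (h * h'))⁻¹ * (t h * s h) * g''.1 h h') :=
    r_mul_right E _ (r_mul_right E _ (r_mul_right E _ hc))
  have step2 : E.r (h * h')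
      (α h (t h') * α h (s h') * (t (h * h') * s (h * h'))⁻¹ * (t h * s h) * g''.1 h h')
      (α h (t h') * (t (h * h'))⁻¹ * t h * g'.1 h h') := by
    have := E.mul_left (α h (t h') * (t (h * h'))⁻¹ * t h) (hs h h')
    refine r_of_eq E ?_ rfl this
    simp [mul_comm, mul_left_comm, mul_assoc]
  exact (E.iseqv _).trans step1 ((E.iseqv _).trans step2 (ht h h'))

theorem fsEquiv_mul_left (E : IndexedEqv H N) (hα : CompatibleAction E α)
    {g g₁ : FactorSets E α} (g' : FactorSets E α) (h : fsEquiv E α g g₁) :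
    fsEquiv E α ⟨fun h h' => g.1 h h' * g'.1 h h', fs_mul E hα g g'⟩
      ⟨fun h h' => g₁.1 h h' * g'.1 h h', fs_mul E hα g₁ g'⟩ := by
  obtain ⟨t, ht1, ht⟩ := h
  refine ⟨t, ht1, fun h h' => ?_⟩
  have := r_mul_right E (g'.1 h h') (ht h h')
  exact r_of_eq E (by simp [mul_assoc]) rfl this

theorem fsEquiv_mul_right (E : IndexedEqv H N) (hα : CompatibleAction E α)
    (g : FactorSets E α) {g' g₁ : FactorSets E α} (h : fsEquiv E α g' g₁) :
    fsEquiv E α ⟨fun h h' => g.1 h h' * g'.1 h h', fs_mul E hα g g'⟩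
      ⟨fun h h' => g.1 h h' * g₁.1 h h', fs_mul E hα g g₁⟩ := by
  obtain ⟨t, ht1, ht⟩ := h
  refine ⟨t, ht1, fun h h' => ?_⟩
  have := r_mul_right E (g.1 h h') (ht h h')
  refine r_of_eq E ?_ ?_ this <;> simp [mul_comm, mul_left_comm, mul_assoc]

theorem fsEquiv_inv (E : IndexedEqv H N) (hα : CompatibleAction E α)
    {g g' : FactorSets E α} (h : fsEquiv E α g g') :
    fsEquiv E α ⟨fun h h' => (g.1 h h')⁻¹, fs_inv E hα g⟩
      ⟨fun h h' => (g'.1 h h')⁻¹, fs_inv E hα g'⟩ := by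
  obtain ⟨t, ht1, ht⟩ := h
  refine ⟨fun h => (t h)⁻¹, by simp [ht1], fun h h' => ?_⟩
  have hinv := r_inv E (ht h h')
  have h2 : E.r (h * h')
      (α h (t h')⁻¹ * ((t (h * h'))⁻¹)⁻¹ * (t h)⁻¹ * (g'.1 h h')⁻¹)
      ((α h (t h') * (t (h * h'))⁻¹ * t h * g'.1 h h')⁻¹) := by
    have := r_mul_right E ((t (h * h'))⁻¹⁻¹ * (t h)⁻¹ * (g'.1 h h')⁻¹)
      (E.mul_right h' (alpha_inv hα h (t h')))
    refine r_of_eq E ?_ ?_ this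
    · simp [mul_assoc]
    · simp [mul_comm, mul_left_comm, mul_assoc]
  exact (E.iseqv _).trans h2 hinv

end FSAux

end FSAux

/-- The factor sets relative to (E,α), under pointwise multiplication modulo
the inner factor sets, form an abelian group (the second cohomology group H²(H,N,E,[α])). -/
theorem factor_sets_comm_group {H N : Type*} [Monoid H] [CommGroup N] (E : IndexedEqv H N)
    (α : H → N → N) (hα : CompatibleAction E α) :
    -- the relation "differ by an inner factor set" is an equivalence relation
    Equivalence (fsEquiv E α) ∧
    -- factor sets are closed under pointwise multiplication
    (∀ g g' : FactorSets E α, IsFactorSet E α (fun h h' => g.1 h h' * g'.1 h h')) ∧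
    -- the quotient is an abelian group under pointwise multiplication
    ∃ G : CommGroup (Quot (fsEquiv E α)),
      ∀ (g g' : FactorSets E α) (hp : IsFactorSet E α (fun h h' => g.1 h h' * g'.1 h h')),
        G.mul (Quot.mk _ g) (Quot.mk _ g') =
          Quot.mk _ ⟨fun h h' => g.1 h h' * g'.1 h h', hp⟩ := by
  have heqv : Equivalence (fsEquiv E α) :=
    ⟨FSAux.fsEquiv_refl hα, FSAux.fsEquiv_symm hα, FSAux.fsEquiv_trans hα⟩
  refine ⟨heqv, FSAux.fs_mul E hα, ?_⟩
  let fmul : FactorSets E α → FactorSets E α → FactorSets E α :=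
    fun g g' => ⟨fun h h' => g.1 h h' * g'.1 h h', FSAux.fs_mul E hα g g'⟩
  let qmul : Quot (fsEquiv E α) → Quot (fsEquiv E α) → Quot (fsEquiv E α) :=
    Quot.map₂ fmul (fun a _ _ h => FSAux.fsEquiv_mul_right E hα a h)
      (fun _ _ b h => FSAux.fsEquiv_mul_left E hα b h)
  let qinv : Quot (fsEquiv E α) → Quot (fsEquiv E α) :=
    Quot.map (fun g => ⟨fun h h' => (g.1 h h')⁻¹, FSAux.fs_inv E hα g⟩)
      (fun _ _ h => FSAux.fsEquiv_inv E hα h)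
  let qone : Quot (fsEquiv E α) := Quot.mk _ ⟨fun _ _ => 1, FSAux.fs_one E hα⟩
  refine ⟨{ mul := qmul
            one := qone
            inv := qinv
            mul_assoc := ?_
            one_mul := ?_
            mul_one := ?_
            inv_mul_cancel := ?_
            mul_comm := ?_ }, ?_⟩
  · intro a b c
    induction a using Quot.ind with | _ a =>
    induction b using Quot.ind with | _ b =>
    induction c using Quot.ind with | _ c =>
    exact congrArg (Quot.mk _) (Subtype.ext (funext fun h => funext fun h' =>
      mul_assoc (a.1 h h') (b.1 h h') (c.1 h h')))
  · intro a
    induction a using Quot.ind with | _ a =>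
    exact congrArg (Quot.mk _) (Subtype.ext (funext fun h => funext fun h' =>
      one_mul (a.1 h h')))
  · intro a
    induction a using Quot.ind with | _ a =>
    exact congrArg (Quot.mk _) (Subtype.ext (funext fun h => funext fun h' =>
      mul_one (a.1 h h')))
  · intro a
    induction a using Quot.ind with | _ a =>
    exact congrArg (Quot.mk _) (Subtype.ext (funext fun h => funext fun h' =>
      inv_mul_cancel (a.1 h h')))
  · intro a b
    induction a using Quot.ind with | _ a =>
    induction b using Quot.ind with | _ b =>
    exact congrArg (Quot.mk _) (Subtype.ext (funext fun h => funext fun h' =>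
      mul_comm (a.1 h h') (b.1 h h')))
  · intro g g' hp
    exact congrArg (Quot.mk _) (Subtype.ext rfl)
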